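/- Let n ≥ 1 be an integer and set η = (√2 − 1)/(√(2n) + √2 − 1). Then for every real ξ with 0 ≤ ξ ≤ 1/√2, the inequality ξ²/(1 + √(1 − ξ²)) + η√(2n)/(1 − η) ≤ 1/√2 holds. Consequently, the proximity bound ξ ≤ 1/√2 is preserved from one interior-point iteration to the next under the update τ₊ = (1 − η)τ. -/

import Mathlib

/-- invariance of the proximity bound `ξ ≤ 1/√2`. With
`η = (√2 − 1)/(√(2n) + √2 − 1)`, for every `0 ≤ ξ ≤ 1/√2`,
`ξ²/(1 + √(1 − ξ²)) + η√(2n)/(1 − η) ≤ 1/√2`. -/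
theorem proximity_bound_invariant (n : ℕ) (hn : 1 ≤ n)
    (η : ℝ) (hη : η = (Real.sqrt 2 - 1) / (Real.sqrt (2 * n) + Real.sqrt 2 - 1)) :
    ∀ ξ : ℝ, 0 ≤ ξ → ξ ≤ 1 / Real.sqrt 2 →
      ξ ^ 2 / (1 + Real.sqrt (1 - ξ ^ 2)) + η * Real.sqrt (2 * n) / (1 - η) ≤
        1 / Real.sqrt 2 := by
  intro ξ hξ0 hξ
  have hs2 : (1:ℝ) < Real.sqrt 2 := by
    have : Real.sqrt 1 < Real.sqrt 2 := Real.sqrt_lt_sqrt (by norm_num) (by norm_num)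
    simpa using this
  have hs2pos : (0:ℝ) < Real.sqrt 2 := by linarith
  have hm : Real.sqrt 2 ≤ Real.sqrt (2 * n) := by
    apply Real.sqrt_le_sqrt
    have : (1:ℝ) ≤ (n:ℝ) := by exact_mod_cast hn
    nlinarith
  have hmpos : (0:ℝ) < Real.sqrt (2 * n) := lt_of_lt_of_le hs2pos hm
  set m := Real.sqrt (2 * n) with hmdef
  have hden : (0:ℝ) < m + Real.sqrt 2 - 1 := by linarith
  have h1η : 1 - η = m / (m + Real.sqrt 2 - 1) := by
    rw [hη]; field_simp; ring
  have hterm : η * m / (1 - η) = Real.sqrt 2 - 1 := by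
    rw [h1η, hη]
    field_simp
  rw [hterm]
  -- main inequality
  have hξ2 : ξ ^ 2 ≤ 1 / 2 := by
    have := mul_le_mul hξ hξ hξ0 (le_of_lt (by positivity))
    have h12 : (1 / Real.sqrt 2) * (1 / Real.sqrt 2) = 1 / 2 := by
      rw [div_mul_div_comm, Real.mul_self_sqrt (by norm_num)]; norm_num
    nlinarith
  have hss2 : Real.sqrt 2 * Real.sqrt 2 = 2 := Real.mul_self_sqrt (by norm_num)
  have hs : Real.sqrt (1 - ξ ^ 2) ≥ 1 / Real.sqrt 2 := by
    rw [ge_iff_le, Real.le_sqrt' (by positivity)]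
    rw [div_pow, one_pow, Real.sq_sqrt (by norm_num : (0:ℝ) ≤ 2)]
    rw [div_le_iff₀ (by norm_num)]
    linarith
  set s := Real.sqrt (1 - ξ ^ 2) with hsdef
  have hs0 : 0 ≤ s := Real.sqrt_nonneg _
  have hssq : s ^ 2 = 1 - ξ ^ 2 := Real.sq_sqrt (by linarith)
  have hkey : ξ ^ 2 / (1 + s) = 1 - s := by
    rw [div_eq_iff (by positivity : (1:ℝ) + s ≠ 0)]
    nlinarith
  rw [hkey]
  have h1 : Real.sqrt 2 * (1 / Real.sqrt 2) = 1 := by field_simp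
  have hfin : Real.sqrt 2 - s ≤ 1 / Real.sqrt 2 := by
    rw [le_div_iff₀ hs2pos]
    nlinarith [mul_le_mul_of_nonneg_left hs hs2pos.le]
  linarith
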